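/- For every nonassociative word w in X*, the image of w in the free right-symmetric algebra A = RS⟨x_1,…,x_n⟩ is nonzero and its leading word w̄ satisfies w̄ ≤ w; moreover, w̄ = w holds if and only if w is a good word. -/

import Mathlib

namespace RS
set_option linter.unusedSectionVars false

/-- The degree of a nonassociative word. -/
def deg {X : Type*} : FreeMagma X → ℕ
  | .of _ => 1
  | .mul u v => deg u + deg v

/-- The order on nonassociative words: `u < v` if `d u < d v`; words of equal degree 1 are
compared in `X`; words `u = u₁u₂`, `v = v₁v₂` of equal degree `≥ 2` are compared
lexicographically. -/
def wlt {X : Type*} [LinearOrder X] : FreeMagma X → FreeMagma X → Prop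
  | .of a, .of b => a < b
  | .of _, .mul _ _ => True
  | .mul _ _, .of _ => False
  | .mul u₁ u₂, .mul v₁ v₂ =>
      deg (FreeMagma.mul u₁ u₂) < deg (FreeMagma.mul v₁ v₂) ∨
        (deg (FreeMagma.mul u₁ u₂) = deg (FreeMagma.mul v₁ v₂) ∧
          (wlt u₁ v₁ ∨ (u₁ = v₁ ∧ wlt u₂ v₂)))

/-- `u ≤ v` on nonassociative words. -/
def wle {X : Type*} [LinearOrder X] (u v : FreeMagma X) : Prop := wlt u v ∨ u = v

/-- A word is good if it contains no subword `(rs)t` with `s > t`. -/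
def IsGood {X : Type*} [LinearOrder X] : FreeMagma X → Prop
  | .of _ => True
  | .mul (.of _) v => IsGood v
  | .mul (.mul u₁ u₂) v =>
      IsGood (FreeMagma.mul u₁ u₂) ∧ IsGood v ∧ ¬ wlt v u₂

/-- Evaluation of a nonassociative word at values `x` in a magma `A`. -/
def evalWord {X A : Type*} [Mul A] (x : X → A) : FreeMagma X → A
  | .of a => x a
  | .mul u v => evalWord x u * evalWord x v

/-- Data exhibiting a nonunital nonassociative `k`-algebra `A` as the free right-symmetric
algebra `RS⟨x_1,…,x_n⟩`: `A` satisfies the right-symmetric identity and the images of the good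
words form a `k`-linear basis (Segal's theorem). -/
structure FreeRSData (k : Type*) [Field k] (n : ℕ) (A : Type*)
    [NonUnitalNonAssocRing A] [Module k A] where
  rightSymm : ∀ a b c : A, (a * b) * c - a * (b * c) = (a * c) * b - a * (c * b)
  x : Fin n → A
  basis : Module.Basis {w : FreeMagma (Fin n) // IsGood w} k A
  basis_eq : ∀ w : {w : FreeMagma (Fin n) // IsGood w}, basis w = evalWord x w.1

/-- `w` is the leading word of `f`: it is a good word occurring in the representation of `f`
in the basis of good words, and every other good word occurring there is smaller. -/
def IsLeadingWord {k : Type*} [Field k] {n : ℕ} {A : Type*} [NonUnitalNonAssocRing A]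
    [Module k A] (D : FreeRSData k n A) (f : A) (w : FreeMagma (Fin n)) : Prop :=
  ∃ hw : IsGood w,
    (⟨w, hw⟩ : {u : FreeMagma (Fin n) // IsGood u}) ∈ (D.basis.repr f).support ∧
      ∀ u ∈ (D.basis.repr f).support, u.1 ≠ w → wlt u.1 w

/-- The left-normed word `x R_{w_1} ⋯ R_{w_m} = (…((x w_1) w_2) … w_m)`. -/
def leftNormed {X : Type*} (a : FreeMagma X) (l : List (FreeMagma X)) : FreeMagma X :=
  l.foldl FreeMagma.mul a

/-- The degree of a word in the variable `a`. -/
def countVar {X : Type*} [DecidableEq X] (a : X) : FreeMagma X → ℕ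
  | .of b => if b = a then 1 else 0
  | .mul u v => countVar a u + countVar a v

/-- The two-sided ideal of the nonunital nonassociative `k`-algebra `A` generated by `f`. -/
def idealGen (k : Type*) [Field k] {A : Type*} [NonUnitalNonAssocRing A] [Module k A]
    (f : A) : Submodule k A :=
  sInf {I : Submodule k A | f ∈ I ∧ ∀ a : A, ∀ y ∈ I, a * y ∈ I ∧ y * a ∈ I}

/-- A pair of (nonzero) elements `f, g` is reducible if there is a good word `s` in a single
variable with `s(f̄) = ḡ` or `s(ḡ) = f̄`. -/
def Reducible {k : Type*} [Field k] {n : ℕ} {A : Type*} [NonUnitalNonAssocRing A]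
    [Module k A] (D : FreeRSData k n A) (f g : A) : Prop :=
  ∃ wf wg : FreeMagma (Fin n), IsLeadingWord D f wf ∧ IsLeadingWord D g wg ∧
    ∃ s : FreeMagma Unit, IsGood s ∧
      (evalWord (fun _ => wf) s = wg ∨ evalWord (fun _ => wg) s = wf)

/-- An elementary automorphism: it fixes all generators but one, which is sent to
`α x_i + f` with `α ≠ 0` and `f` in the subalgebra generated by the other generators. -/
def IsElementary {k : Type*} [Field k] {n : ℕ} {A : Type*} [NonUnitalNonAssocRing A]
    [Module k A] [SMulCommClass k A A] [IsScalarTower k A A]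
    (D : FreeRSData k n A) (e : A →ₙₐ[k] A) : Prop :=
  Function.Bijective e ∧ ∃ i : Fin n,
    (∀ j : Fin n, j ≠ i → e (D.x j) = D.x j) ∧
    ∃ (α : k) (f : A), α ≠ 0 ∧
      f ∈ NonUnitalAlgebra.adjoin k (D.x '' {j | j ≠ i}) ∧
      e (D.x i) = α • D.x i + f


section Order

variable {n : ℕ}

lemma deg_pos (w : FreeMagma (Fin n)) : 1 ≤ deg w := by
  induction w using FreeMagma.rec with
  | of a => simp [deg]
  | mul u v ihu ihv => simp only [deg]; omega

/-- bounding function for ranks -/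
def TT (n : ℕ) : ℕ → ℕ
  | 0 => n + 2
  | d + 1 => TT n d * TT n d

lemma TT_two_le (n d : ℕ) : 2 ≤ TT n d := by
  induction d with
  | zero => simp [TT]
  | succ d ih => calc (2:ℕ) ≤ 2 * 2 := by norm_num
                 _ ≤ TT n d * TT n d := Nat.mul_le_mul ih ih
                 _ = TT n (d+1) := rfl

lemma TT_mono (n : ℕ) : Monotone (TT n) := by
  apply monotone_nat_of_le_succ
  intro d
  calc TT n d = TT n d * 1 := (mul_one _).symm
    _ ≤ TT n d * TT n d := Nat.mul_le_mul_left _ (by have := TT_two_le n d; omega)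
    _ = TT n (d+1) := rfl

/-- rank of a word: strictly monotone embedding of `wlt` into `ℕ`. -/
def rk (n : ℕ) : FreeMagma (Fin n) → ℕ
  | .of a => a.val + 1
  | .mul u v => rk n u * TT n (deg u + deg v - 2) + rk n v

lemma rk_pos (w : FreeMagma (Fin n)) : 1 ≤ rk n w := by
  cases w with
  | of a => simp [rk]
  | mul u v =>
    have h1 := rk_pos u
    have h2 := rk_pos v
    have := TT_two_le n (deg u + deg v - 2)
    simp only [rk]
    nlinarith

lemma rk_lt (w : FreeMagma (Fin n)) : rk n w < TT n (deg w - 1) := by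
  induction w using FreeMagma.rec with
  | of a => have := a.isLt; simp only [rk, deg, Nat.sub_self, TT]; omega
  | mul u v ihu ihv =>
    have du := deg_pos u
    have dv := deg_pos v
    set M := TT n (deg u + deg v - 2) with hM
    have hu' : rk n u < M := lt_of_lt_of_le ihu (TT_mono n (by omega))
    have hv' : rk n v < M := lt_of_lt_of_le ihv (TT_mono n (by omega))
    have hidx : deg (FreeMagma.mul u v) - 1 = (deg u + deg v - 2) + 1 := by
      simp only [deg]; omega
    rw [hidx]
    show rk n u * M + rk n v < TT n ((deg u + deg v - 2) + 1)
    have : TT n ((deg u + deg v - 2) + 1) = M * M := rfl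
    rw [this]
    calc rk n u * M + rk n v < rk n u * M + M := by omega
      _ = (rk n u + 1) * M := by ring
      _ ≤ M * M := Nat.mul_le_mul_right _ (by omega)

lemma rk_deg_mono {u v : FreeMagma (Fin n)} (h : deg u < deg v) : rk n u < rk n v := by
  cases v with
  | of a => have := deg_pos u; simp [deg] at h; omega
  | mul v₁ v₂ =>
    have d1 := deg_pos v₁
    have d2 := deg_pos v₂
    have hb : rk n u < TT n (deg u - 1) := rk_lt u
    have hmono : TT n (deg u - 1) ≤ TT n (deg v₁ + deg v₂ - 2) := by
      apply TT_mono; simp only [deg] at h; omega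
    have h1 := rk_pos v₁
    have h2 := rk_pos v₂
    simp only [rk]
    nlinarith

lemma wlt_deg_le {u v : FreeMagma (Fin n)} (h : wlt u v) : deg u ≤ deg v := by
  cases u with
  | of a =>
    cases v with
    | of b => simp [deg]
    | mul v₁ v₂ => have := deg_pos v₁; have := deg_pos v₂; simp only [deg]; omega
  | mul u₁ u₂ =>
    cases v with
    | of b => exact absurd h (by simp [wlt])
    | mul v₁ v₂ =>
      rcases h with h | ⟨h, _⟩
      · omega
      · omega

lemma rk_strictMono : ∀ {u v : FreeMagma (Fin n)}, wlt u v → rk n u < rk n v := by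
  intro u
  induction u using FreeMagma.rec with
  | of a =>
    intro v h
    cases v with
    | of b =>
      have hab : a < b := h
      simp only [rk]
      exact Nat.add_lt_add_right hab 1
    | mul v₁ v₂ =>
      exact rk_deg_mono (by have := deg_pos v₁; have := deg_pos v₂; simp only [deg]; omega)
  | mul u₁ u₂ ih₁ ih₂ =>
    intro v h
    cases v with
    | of b => exact absurd h (by simp [wlt])
    | mul v₁ v₂ =>
      rcases h with h | ⟨hdeg, h⟩
      · exact rk_deg_mono h
      · simp only [deg] at hdeg
        have hidx : deg u₁ + deg u₂ - 2 = deg v₁ + deg v₂ - 2 := by omega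
        rcases h with h | ⟨rfl, h⟩
        · have h1 : rk n u₁ < rk n v₁ := ih₁ h
          have h2 : rk n u₂ < TT n (deg u₁ + deg u₂ - 2) :=
            lt_of_lt_of_le (rk_lt u₂) (TT_mono n (by have := deg_pos u₁; omega))
          simp only [rk, ← hidx]
          set M := TT n (deg u₁ + deg u₂ - 2) with hM
          calc rk n u₁ * M + rk n u₂ < rk n u₁ * M + M := by omega
            _ = (rk n u₁ + 1) * M := by ring
            _ ≤ rk n v₁ * M := Nat.mul_le_mul_right _ (by omega)
            _ ≤ rk n v₁ * M + rk n v₂ := Nat.le_add_right _ _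
        · have h2 : rk n u₂ < rk n v₂ := ih₂ h
          have hdd : deg u₂ = deg v₂ := by omega
          simp only [rk, hdd]
          omega

lemma wlt_trichotomy : ∀ u v : FreeMagma (Fin n), wlt u v ∨ u = v ∨ wlt v u := by
  intro u
  induction u using FreeMagma.rec with
  | of a =>
    intro v
    cases v with
    | of b =>
      rcases lt_trichotomy a b with h | h | h
      · exact Or.inl h
      · exact Or.inr (Or.inl (by rw [h]))
      · exact Or.inr (Or.inr h)
    | mul v₁ v₂ => exact Or.inl trivial
  | mul u₁ u₂ ih₁ ih₂ =>
    intro v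
    cases v with
    | of b => exact Or.inr (Or.inr trivial)
    | mul v₁ v₂ =>
      rcases Nat.lt_trichotomy (deg (FreeMagma.mul u₁ u₂)) (deg (FreeMagma.mul v₁ v₂)) with
        h | h | h
      · exact Or.inl (Or.inl h)
      · rcases ih₁ v₁ with h1 | h1 | h1
        · exact Or.inl (Or.inr ⟨h, Or.inl h1⟩)
        · subst h1
          rcases ih₂ v₂ with h2 | h2 | h2
          · exact Or.inl (Or.inr ⟨h, Or.inr ⟨rfl, h2⟩⟩)
          · subst h2; exact Or.inr (Or.inl rfl)
          · exact Or.inr (Or.inr (Or.inr ⟨h.symm, Or.inr ⟨rfl, h2⟩⟩))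
        · exact Or.inr (Or.inr (Or.inr ⟨h.symm, Or.inl h1⟩))
      · exact Or.inr (Or.inr (Or.inl h))

lemma wlt_iff_rk {u v : FreeMagma (Fin n)} : wlt u v ↔ rk n u < rk n v := by
  constructor
  · exact rk_strictMono
  · intro h
    rcases wlt_trichotomy u v with h1 | rfl | h1
    · exact h1
    · omega
    · exact absurd (rk_strictMono h1) (by omega)

lemma wlt_irrefl (w : FreeMagma (Fin n)) : ¬ wlt w w := by
  rw [wlt_iff_rk]; omega

lemma wlt_trans {u v w : FreeMagma (Fin n)} (h1 : wlt u v) (h2 : wlt v w) : wlt u w := by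
  rw [wlt_iff_rk] at *; omega

lemma wle_wlt_trans {u v w : FreeMagma (Fin n)} (h1 : wle u v) (h2 : wlt v w) : wlt u w := by
  rcases h1 with h1 | rfl
  · exact wlt_trans h1 h2
  · exact h2

lemma wlt_of_deg_lt {u v : FreeMagma (Fin n)} (h : deg u < deg v) : wlt u v := by
  cases v with
  | of b => have := deg_pos u; simp [deg] at h; omega
  | mul v₁ v₂ =>
    cases u with
    | of a => trivial
    | mul u₁ u₂ => exact Or.inl h

lemma wlt_mul_left {s u : FreeMagma (Fin n)} (v : FreeMagma (Fin n)) (h : wlt s u) :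
    wlt (FreeMagma.mul s v) (FreeMagma.mul u v) := by
  rcases Nat.lt_or_ge (deg s) (deg u) with hd | hd
  · exact Or.inl (by simp only [deg]; omega)
  · have hd' : deg s = deg u := le_antisymm (wlt_deg_le h) hd
    exact Or.inr ⟨by simp only [deg]; omega, Or.inl h⟩

lemma wlt_mul_right (u : FreeMagma (Fin n)) {t v : FreeMagma (Fin n)} (h : wlt t v) :
    wlt (FreeMagma.mul u t) (FreeMagma.mul u v) := by
  rcases Nat.lt_or_ge (deg t) (deg v) with hd | hd
  · exact Or.inl (by simp only [deg]; omega)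
  · have hd' : deg t = deg v := le_antisymm (wlt_deg_le h) hd
    exact Or.inr ⟨by simp only [deg]; omega, Or.inr ⟨rfl, h⟩⟩

lemma wlt_swap {u₁ u₂ v : FreeMagma (Fin n)} (h : wlt v u₂) :
    wlt (FreeMagma.mul (FreeMagma.mul u₁ v) u₂) (FreeMagma.mul (FreeMagma.mul u₁ u₂) v) := by
  have hd : deg v ≤ deg u₂ := wlt_deg_le h
  refine Or.inr ⟨by simp only [deg]; omega, Or.inl (wlt_mul_right u₁ h)⟩

lemma wlt_assoc₁ (u₁ u₂ v : FreeMagma (Fin n)) :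
    wlt (FreeMagma.mul u₁ (FreeMagma.mul u₂ v)) (FreeMagma.mul (FreeMagma.mul u₁ u₂) v) := by
  refine Or.inr ⟨by simp only [deg]; omega, Or.inl (wlt_of_deg_lt ?_)⟩
  have := deg_pos u₂; simp only [deg]; omega

lemma wlt_assoc₂ (u₁ u₂ v : FreeMagma (Fin n)) :
    wlt (FreeMagma.mul u₁ (FreeMagma.mul v u₂)) (FreeMagma.mul (FreeMagma.mul u₁ u₂) v) := by
  refine Or.inr ⟨by simp only [deg]; omega, Or.inl (wlt_of_deg_lt ?_)⟩
  have := deg_pos u₂; simp only [deg]; omega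

lemma wlt_left (u v : FreeMagma (Fin n)) : wlt u (FreeMagma.mul u v) :=
  wlt_of_deg_lt (by have := deg_pos v; simp only [deg]; omega)

lemma wlt_right (u v : FreeMagma (Fin n)) : wlt v (FreeMagma.mul u v) :=
  wlt_of_deg_lt (by have := deg_pos u; simp only [deg]; omega)

end Order

section Algebra

variable {k : Type*} [Field k] {n : ℕ} {A : Type*} [NonUnitalNonAssocRing A]
  [Module k A] [SMulCommClass k A A] [IsScalarTower k A A] (D : FreeRSData k n A)

lemma eval_good (w : FreeMagma (Fin n)) (h : IsGood w) :
    evalWord D.x w = D.basis ⟨w, h⟩ := (D.basis_eq ⟨w, h⟩).symm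

lemma repr_eval_good (w : FreeMagma (Fin n)) (h : IsGood w) :
    D.basis.repr (evalWord D.x w) = Finsupp.single ⟨w, h⟩ 1 := by
  rw [eval_good D w h, Module.Basis.repr_self]

lemma mul_expand_left (f : A) (v : FreeMagma (Fin n)) :
    f * evalWord D.x v = ∑ s ∈ (D.basis.repr f).support,
      (D.basis.repr f) s • evalWord D.x (FreeMagma.mul s.1 v) := by
  conv_lhs => rw [← D.basis.linearCombination_repr f]
  rw [Finsupp.linearCombination_apply, Finsupp.sum, Finset.sum_mul]
  refine Finset.sum_congr rfl fun s _ => ?_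
  rw [smul_mul_assoc, D.basis_eq]
  rfl

lemma mul_expand_right (u : FreeMagma (Fin n)) (f : A) :
    evalWord D.x u * f = ∑ t ∈ (D.basis.repr f).support,
      (D.basis.repr f) t • evalWord D.x (FreeMagma.mul u t.1) := by
  conv_lhs => rw [← D.basis.linearCombination_repr f]
  rw [Finsupp.linearCombination_apply, Finsupp.sum, Finset.mul_sum]
  refine Finset.sum_congr rfl fun t _ => ?_
  rw [mul_smul_comm, D.basis_eq]
  rfl

lemma three_term (u₁ u₂ v : FreeMagma (Fin n)) :
    evalWord D.x (FreeMagma.mul (FreeMagma.mul u₁ u₂) v) =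
      evalWord D.x (FreeMagma.mul (FreeMagma.mul u₁ v) u₂) +
      evalWord D.x (FreeMagma.mul u₁ (FreeMagma.mul u₂ v)) -
      evalWord D.x (FreeMagma.mul u₁ (FreeMagma.mul v u₂)) := by
  show (evalWord D.x u₁ * evalWord D.x u₂) * evalWord D.x v =
    (evalWord D.x u₁ * evalWord D.x v) * evalWord D.x u₂ +
    evalWord D.x u₁ * (evalWord D.x u₂ * evalWord D.x v) -
    evalWord D.x u₁ * (evalWord D.x v * evalWord D.x u₂)
  have h := D.rightSymm (evalWord D.x u₁) (evalWord D.x u₂) (evalWord D.x v)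
  have h2 := eq_add_of_sub_eq h
  rw [h2]; abel

/-- the sum-of-coefficients linear functional -/
noncomputable def sig : ({w : FreeMagma (Fin n) // IsGood w} →₀ k) →ₗ[k] k :=
  Finsupp.lsum ℕ fun _ => LinearMap.id

lemma sig_apply (f : {w : FreeMagma (Fin n) // IsGood w} →₀ k) :
    sig f = ∑ s ∈ f.support, f s := by
  rw [sig, Finsupp.lsum_apply]; rfl

lemma sig_single (s : {w : FreeMagma (Fin n) // IsGood w}) :
    sig (Finsupp.single s (1 : k)) = 1 := by
  rw [sig, Finsupp.lsum_single]; rfl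

lemma good_case (w : FreeMagma (Fin n)) (h : IsGood w) :
    sig (D.basis.repr (evalWord D.x w)) = 1 ∧
      ∀ u ∈ (D.basis.repr (evalWord D.x w)).support,
        wlt u.1 w ∨ (u.1 = w ∧ IsGood w) := by
  rw [repr_eval_good D w h]
  constructor
  · exact sig_single _
  · intro u hu
    rw [Finsupp.support_single_ne_zero _ one_ne_zero, Finset.mem_singleton] at hu
    exact Or.inr ⟨by rw [hu], h⟩

theorem main_aux (w : FreeMagma (Fin n)) :
    sig (D.basis.repr (evalWord D.x w)) = 1 ∧
      ∀ u ∈ (D.basis.repr (evalWord D.x w)).support,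
        wlt u.1 w ∨ (u.1 = w ∧ IsGood w) := by
  suffices h : ∀ N w, rk n w < N →
      (sig (D.basis.repr (evalWord D.x w)) = 1 ∧
        ∀ u ∈ (D.basis.repr (evalWord D.x w)).support,
          wlt u.1 w ∨ (u.1 = w ∧ IsGood w)) from h (rk n w + 1) w (by omega)
  intro N
  induction N with
  | zero => intro w h; exact absurd h (by have := rk_pos w; omega)
  | succ N IH =>
    intro w hwN
    -- generic treatment of one-sided expansion
    have expand : ∀ u v : FreeMagma (Fin n), rk n (FreeMagma.mul u v) < N + 1 → ¬ IsGood u →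
        (sig (D.basis.repr (evalWord D.x (FreeMagma.mul u v))) = 1 ∧
          ∀ u' ∈ (D.basis.repr (evalWord D.x (FreeMagma.mul u v))).support,
            wlt u'.1 (FreeMagma.mul u v) ∨ (u'.1 = FreeMagma.mul u v ∧ IsGood (FreeMagma.mul u v))) := by
      intro u v hwN hu
      have hru : rk n u < N := by
        have := rk_strictMono (wlt_left u v); omega
      obtain ⟨hsum_u, hsupp_u⟩ := IH u hru
      have hslt : ∀ s ∈ (D.basis.repr (evalWord D.x u)).support, wlt s.1 u := by
        intro s hs
        rcases hsupp_u s hs with h | ⟨_, hg⟩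
        · exact h
        · exact absurd hg hu
      have hexp : evalWord D.x (FreeMagma.mul u v) =
          ∑ s ∈ (D.basis.repr (evalWord D.x u)).support,
            (D.basis.repr (evalWord D.x u)) s • evalWord D.x (FreeMagma.mul s.1 v) :=
        mul_expand_left D (evalWord D.x u) v
      have hrepr : D.basis.repr (evalWord D.x (FreeMagma.mul u v)) =
          ∑ s ∈ (D.basis.repr (evalWord D.x u)).support,
            (D.basis.repr (evalWord D.x u)) s •
              D.basis.repr (evalWord D.x (FreeMagma.mul s.1 v)) := by
        rw [hexp, map_sum]
        exact Finset.sum_congr rfl fun s _ => map_smul _ _ _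
      have hrk : ∀ s ∈ (D.basis.repr (evalWord D.x u)).support,
          rk n (FreeMagma.mul s.1 v) < N := by
        intro s hs
        have := rk_strictMono (wlt_mul_left v (hslt s hs))
        omega
      constructor
      · rw [hrepr, map_sum]
        have : ∀ s ∈ (D.basis.repr (evalWord D.x u)).support,
            sig ((D.basis.repr (evalWord D.x u)) s •
              D.basis.repr (evalWord D.x (FreeMagma.mul s.1 v))) =
            (D.basis.repr (evalWord D.x u)) s := by
          intro s hs
          rw [map_smul, (IH _ (hrk s hs)).1, smul_eq_mul, mul_one]
        rw [Finset.sum_congr rfl this, ← sig_apply, hsum_u]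
      · intro u' hu'
        left
        have hne := Finsupp.mem_support_iff.mp hu'
        rw [hrepr, Finsupp.finset_sum_apply] at hne
        obtain ⟨s, hs, hne2⟩ := Finset.exists_ne_zero_of_sum_ne_zero hne
        have h2 : (D.basis.repr (evalWord D.x (FreeMagma.mul s.1 v))) u' ≠ 0 := by
          intro h0
          exact hne2 (by rw [Finsupp.smul_apply, h0, smul_zero])
        have hm := Finsupp.mem_support_iff.mpr h2
        have hlt_sv : wlt (FreeMagma.mul s.1 v) (FreeMagma.mul u v) :=
          wlt_mul_left v (hslt s hs)
        rcases (IH _ (hrk s hs)).2 u' hm with h | ⟨heq, _⟩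
        · exact wlt_trans h hlt_sv
        · rw [heq]; exact hlt_sv
    have expandR : ∀ u v : FreeMagma (Fin n), rk n (FreeMagma.mul u v) < N + 1 → ¬ IsGood v →
        (sig (D.basis.repr (evalWord D.x (FreeMagma.mul u v))) = 1 ∧
          ∀ u' ∈ (D.basis.repr (evalWord D.x (FreeMagma.mul u v))).support,
            wlt u'.1 (FreeMagma.mul u v) ∨ (u'.1 = FreeMagma.mul u v ∧ IsGood (FreeMagma.mul u v))) := by
      intro u v hwN hv
      have hrv : rk n v < N := by
        have := rk_strictMono (wlt_right u v); omega
      obtain ⟨hsum_v, hsupp_v⟩ := IH v hrv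
      have hslt : ∀ t ∈ (D.basis.repr (evalWord D.x v)).support, wlt t.1 v := by
        intro t ht
        rcases hsupp_v t ht with h | ⟨_, hg⟩
        · exact h
        · exact absurd hg hv
      have hexp : evalWord D.x (FreeMagma.mul u v) =
          ∑ t ∈ (D.basis.repr (evalWord D.x v)).support,
            (D.basis.repr (evalWord D.x v)) t • evalWord D.x (FreeMagma.mul u t.1) :=
        mul_expand_right D u (evalWord D.x v)
      have hrepr : D.basis.repr (evalWord D.x (FreeMagma.mul u v)) =
          ∑ t ∈ (D.basis.repr (evalWord D.x v)).support,
            (D.basis.repr (evalWord D.x v)) t •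
              D.basis.repr (evalWord D.x (FreeMagma.mul u t.1)) := by
        rw [hexp, map_sum]
        exact Finset.sum_congr rfl fun t _ => map_smul _ _ _
      have hrk : ∀ t ∈ (D.basis.repr (evalWord D.x v)).support,
          rk n (FreeMagma.mul u t.1) < N := by
        intro t ht
        have := rk_strictMono (wlt_mul_right u (hslt t ht))
        omega
      constructor
      · rw [hrepr, map_sum]
        have : ∀ t ∈ (D.basis.repr (evalWord D.x v)).support,
            sig ((D.basis.repr (evalWord D.x v)) t •
              D.basis.repr (evalWord D.x (FreeMagma.mul u t.1))) =
            (D.basis.repr (evalWord D.x v)) t := by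
          intro t ht
          rw [map_smul, (IH _ (hrk t ht)).1, smul_eq_mul, mul_one]
        rw [Finset.sum_congr rfl this, ← sig_apply, hsum_v]
      · intro u' hu'
        left
        have hne := Finsupp.mem_support_iff.mp hu'
        rw [hrepr, Finsupp.finset_sum_apply] at hne
        obtain ⟨t, ht, hne2⟩ := Finset.exists_ne_zero_of_sum_ne_zero hne
        have h2 : (D.basis.repr (evalWord D.x (FreeMagma.mul u t.1))) u' ≠ 0 := by
          intro h0
          exact hne2 (by rw [Finsupp.smul_apply, h0, smul_zero])
        have hm := Finsupp.mem_support_iff.mpr h2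
        have hlt_ut : wlt (FreeMagma.mul u t.1) (FreeMagma.mul u v) :=
          wlt_mul_right u (hslt t ht)
        rcases (IH _ (hrk t ht)).2 u' hm with h | ⟨heq, _⟩
        · exact wlt_trans h hlt_ut
        · rw [heq]; exact hlt_ut
    cases w using FreeMagma.rec with
    | of a => exact good_case D _ trivial
    | mul u v =>
      by_cases hu : IsGood u
      · by_cases hv : IsGood v
        · by_cases hw' : IsGood (FreeMagma.mul u v)
          · exact good_case D _ hw'
          · -- bad at the top
            cases u using FreeMagma.rec with
            | of a => exact absurd (show IsGood (FreeMagma.mul (FreeMagma.of a) v) from hv) hw'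
            | mul u₁ u₂ =>
              have hvu : wlt v u₂ := by
                by_contra hvu
                exact hw' ⟨hu, hv, hvu⟩
              have h3 := three_term D u₁ u₂ v
              have lt₁ := wlt_swap (u₁ := u₁) hvu
              have lt₂ := wlt_assoc₁ u₁ u₂ v
              have lt₃ := wlt_assoc₂ u₁ u₂ v
              have hr₁ : rk n (FreeMagma.mul (FreeMagma.mul u₁ v) u₂) < N := by
                have := rk_strictMono lt₁; omega
              have hr₂ : rk n (FreeMagma.mul u₁ (FreeMagma.mul u₂ v)) < N := by
                have := rk_strictMono lt₂; omega
              have hr₃ : rk n (FreeMagma.mul u₁ (FreeMagma.mul v u₂)) < N := by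
                have := rk_strictMono lt₃; omega
              have hrepr : D.basis.repr (evalWord D.x (FreeMagma.mul (FreeMagma.mul u₁ u₂) v)) =
                  D.basis.repr (evalWord D.x (FreeMagma.mul (FreeMagma.mul u₁ v) u₂)) +
                  D.basis.repr (evalWord D.x (FreeMagma.mul u₁ (FreeMagma.mul u₂ v))) -
                  D.basis.repr (evalWord D.x (FreeMagma.mul u₁ (FreeMagma.mul v u₂))) := by
                rw [h3, map_sub, map_add]
              constructor
              · rw [hrepr, map_sub, map_add, (IH _ hr₁).1, (IH _ hr₂).1, (IH _ hr₃).1]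
                ring
              · intro u' hu'
                left
                have hne := Finsupp.mem_support_iff.mp hu'
                rw [hrepr] at hne
                simp only [Finsupp.sub_apply, Finsupp.add_apply] at hne
                have hcase :
                    (D.basis.repr (evalWord D.x (FreeMagma.mul (FreeMagma.mul u₁ v) u₂))) u' ≠ 0 ∨
                    (D.basis.repr (evalWord D.x (FreeMagma.mul u₁ (FreeMagma.mul u₂ v)))) u' ≠ 0 ∨
                    (D.basis.repr (evalWord D.x (FreeMagma.mul u₁ (FreeMagma.mul v u₂)))) u' ≠ 0 := by
                  by_contra hc
                  push_neg at hc
                  rw [hc.1, hc.2.1, hc.2.2] at hne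
                  simp at hne
                rcases hcase with h | h | h
                · rcases (IH _ hr₁).2 u' (Finsupp.mem_support_iff.mpr h) with h' | ⟨heq, _⟩
                  · exact wlt_trans h' lt₁
                  · rw [heq]; exact lt₁
                · rcases (IH _ hr₂).2 u' (Finsupp.mem_support_iff.mpr h) with h' | ⟨heq, _⟩
                  · exact wlt_trans h' lt₂
                  · rw [heq]; exact lt₂
                · rcases (IH _ hr₃).2 u' (Finsupp.mem_support_iff.mpr h) with h' | ⟨heq, _⟩
                  · exact wlt_trans h' lt₃
                  · rw [heq]; exact lt₃
        · exact expandR u v hwN hv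
      · exact expand u v hwN hu

end Algebra


/-- Lemma 2.1: for every nonassociative word `w`, its image in the free
right-symmetric algebra `A = RS⟨x_1,…,x_n⟩` is nonzero, its leading word `w̄` satisfies
`w̄ ≤ w`, and `w̄ = w` if and only if `w` is a good word. -/
theorem statement0 (k : Type*) [Field k] (n : ℕ) (A : Type*) [NonUnitalNonAssocRing A]
    [Module k A] [SMulCommClass k A A] [IsScalarTower k A A]
    (D : FreeRSData k n A) (w : FreeMagma (Fin n)) :
    evalWord D.x w ≠ 0 ∧
      ∃ wb : FreeMagma (Fin n), IsLeadingWord D (evalWord D.x w) wb ∧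
        wle wb w ∧ (wb = w ↔ IsGood w) := by
  obtain ⟨hsum, hsupp⟩ := main_aux D w
  have hne : D.basis.repr (evalWord D.x w) ≠ 0 := by
    intro h0
    rw [h0, map_zero] at hsum
    exact zero_ne_one hsum
  constructor
  · intro h0
    exact hne (by rw [h0, map_zero])
  · have hnsupp : (D.basis.repr (evalWord D.x w)).support.Nonempty :=
      Finsupp.support_nonempty_iff.mpr hne
    obtain ⟨m, hm, hmax⟩ :=
      Finset.exists_max_image (D.basis.repr (evalWord D.x w)).support (fun s => rk n s.1) hnsupp
    refine ⟨m.1, ⟨m.2, ?_, ?_⟩, ?_, ?_⟩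
    · simpa using hm
    · intro u hu hneq
      have hle := hmax u hu
      have hne' : rk n u.1 ≠ rk n m.1 := by
        intro he
        apply hneq
        rcases wlt_trichotomy u.1 m.1 with h | h | h
        · exact absurd (rk_strictMono h) (by omega)
        · exact h
        · exact absurd (rk_strictMono h) (by omega)
      have hle' : rk n u.1 ≤ rk n m.1 := hle
      exact wlt_iff_rk.mpr (by omega)
    · rcases hsupp m hm with h | ⟨h, _⟩
      · exact Or.inl h
      · exact Or.inr h
    · constructor
      · intro he
        rcases hsupp m hm with h | ⟨_, hg⟩
        · rw [he] at h
          exact absurd h (wlt_irrefl w)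
        · exact hg
      · intro hg
        rw [repr_eval_good D w hg] at hm
        have := Finsupp.support_single_subset hm
        rw [Finset.mem_singleton] at this
        rw [this]


end RS
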